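/- (Jakubík) Let L be a finite lattice and let p and q be prime intervals in L. Then q is collapsed by con(p) if and only if p is congruence-projective to q, i.e., there is a finite sequence of intervals from p to q, each step being a congruence-perspectivity up or down. -/

import Mathlib

universe u

/-- A congruence of a lattice: an equivalence relation compatible with `⊔` and `⊓`. -/
structure LatCon (L : Type u) [Lattice L] : Type u where
  rel : L → L → Prop
  refl : ∀ a, rel a a
  symm : ∀ {a b}, rel a b → rel b a
  trans : ∀ {a b c}, rel a b → rel b c → rel a c
  sup_comp : ∀ {a b c d}, rel a b → rel c d → rel (a ⊔ c) (b ⊔ d)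
  inf_comp : ∀ {a b c d}, rel a b → rel c d → rel (a ⊓ c) (b ⊓ d)

variable {L : Type u} [Lattice L]

/-- The inclusion order on congruences. -/
def LatCon.le (α β : LatCon L) : Prop := ∀ a b : L, α.rel a b → β.rel a b

/-- The principal congruence `con(x, y)`: the smallest congruence collapsing `x` and `y`. -/
def conOf (x y : L) : LatCon L where
  rel a b := ∀ θ : LatCon L, θ.rel x y → θ.rel a b
  refl a := fun θ _ => θ.refl a
  symm h := fun θ hθ => θ.symm (h θ hθ)
  trans h₁ h₂ := fun θ hθ => θ.trans (h₁ θ hθ) (h₂ θ hθ)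
  sup_comp h₁ h₂ := fun θ hθ => θ.sup_comp (h₁ θ hθ) (h₂ θ hθ)
  inf_comp h₁ h₂ := fun θ hθ => θ.inf_comp (h₁ θ hθ) (h₂ θ hθ)

/-- The bottom congruence: equality. -/
def conBot : LatCon L where
  rel a b := a = b
  refl _ := rfl
  symm h := h.symm
  trans h₁ h₂ := h₁.trans h₂
  sup_comp h₁ h₂ := by rw [h₁, h₂]
  inf_comp h₁ h₂ := by rw [h₁, h₂]

/-- The join of two congruences: the smallest congruence containing both. -/
def conJoin (α β : LatCon L) : LatCon L where
  rel a b := ∀ θ : LatCon L, α.le θ → β.le θ → θ.rel a b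
  refl a := fun θ _ _ => θ.refl a
  symm h := fun θ hα hβ => θ.symm (h θ hα hβ)
  trans h₁ h₂ := fun θ hα hβ => θ.trans (h₁ θ hα hβ) (h₂ θ hα hβ)
  sup_comp h₁ h₂ := fun θ hα hβ => θ.sup_comp (h₁ θ hα hβ) (h₂ θ hα hβ)
  inf_comp h₁ h₂ := fun θ hα hβ => θ.inf_comp (h₁ θ hα hβ) (h₂ θ hα hβ)

/-- A congruence is join-irreducible if it is not the bottom congruence and is not
the join of two congruences unless it equals one of them. -/
def LatCon.JoinIrreducible (θ : LatCon L) : Prop :=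
  θ ≠ conBot ∧ ∀ α β : LatCon L, θ = conJoin α β → θ = α ∨ θ = β

/-- `p` is a prime interval: its bottom is covered by its top. -/
def IsPrimeInt (p : L × L) : Prop := p.1 ⋖ p.2

/-- `[a, b]` is perspective up to `[c, d]`: `b ⊔ c = d` and `a = b ⊓ c`. -/
def PerspUp (p q : L × L) : Prop := p.2 ⊔ q.1 = q.2 ∧ p.1 = p.2 ⊓ q.1

/-- `[a, b]` is perspective down to `[c, d]`: `a ⊓ d = c` and `a ⊔ d = b`. -/
def PerspDn (p q : L × L) : Prop := p.1 ⊓ q.2 = q.1 ∧ p.1 ⊔ q.2 = p.2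

/-- Perspectivity: up or down. -/
def Persp (p q : L × L) : Prop := PerspUp p q ∨ PerspDn p q

/-- `p` is prime-perspective down to `q`: `1_q ≤ 1_p`, `p` is perspective down onto the
interval `[0_p ⊓ 1_q, 1_q]` (i.e. `0_p ⊔ 1_q = 1_p`), and `q ⊆ [0_p ⊓ 1_q, 1_q]`
(i.e. `0_p ⊓ 1_q ≤ 0_q`). -/
def PPerspDn (p q : L × L) : Prop := q.2 ≤ p.2 ∧ p.1 ⊔ q.2 = p.2 ∧ p.1 ⊓ q.2 ≤ q.1

/-- `p` is prime-perspective up to `q`: the dual of `PPerspDn`. -/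
def PPerspUp (p q : L × L) : Prop := p.1 ≤ q.1 ∧ p.2 ⊓ q.1 = p.1 ∧ q.2 ≤ p.2 ⊔ q.1

/-- Prime-perspectivity: up or down. -/
def PPersp (p q : L × L) : Prop := PPerspUp p q ∨ PPerspDn p q

/-- Prime-projectivity: the reflexive-transitive extension of prime-perspectivity. -/
def PProj : (L × L) → (L × L) → Prop := Relation.ReflTransGen PPersp

/-- `q` is collapsed by `con(p)`. -/
def Collapses (p q : L × L) : Prop := (conOf p.1 p.2).rel q.1 q.2

/-- `I` is congruence-perspective up to `J`: `0_J ⊔ 1_I = 1_J` and `0_I ≤ 0_J`. -/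
def CPerspUp (I J : L × L) : Prop := J.1 ⊔ I.2 = J.2 ∧ I.1 ≤ J.1

/-- `I` is congruence-perspective down to `J`: `1_J ⊓ 0_I = 0_J` and `1_J ≤ 1_I`. -/
def CPerspDn (I J : L × L) : Prop := J.2 ⊓ I.1 = J.1 ∧ J.2 ≤ I.2

/-- Congruence-perspectivity: up or down. -/
def CPersp (I J : L × L) : Prop := CPerspUp I J ∨ CPerspDn I J

/-- Congruence-projectivity: the reflexive-transitive extension of congruence-perspectivity. -/
def CProj : (L × L) → (L × L) → Prop := Relation.ReflTransGen CPersp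

section Aux

variable {L : Type u} [Lattice L]

/-- All prime intervals inside `[u, v]` are congruence-projective from `p`. -/
def Good (p : L × L) (u v : L) : Prop :=
  ∀ x y : L, u ≤ x → x ⋖ y → y ≤ v → CProj p (x, y)

private lemma exists_cov_chain [Fintype L] :
    ∀ u v : L, u ≤ v → ∃ (n : ℕ) (t : ℕ → L), t 0 = u ∧ t n = v ∧ ∀ i < n, t i ⋖ t (i + 1) := by
  intro u
  induction u using (wellFounded_gt (α := L)).induction with
  | _ u ih =>
    intro v huv
    rcases eq_or_lt_of_le huv with rfl | hlt
    · exact ⟨0, fun _ => u, rfl, rfl, by omega⟩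
    · obtain ⟨w, hc, hwv⟩ := exists_covBy_le_of_lt hlt
      obtain ⟨n, t, h0, hn, hcov⟩ := ih w hc.lt v hwv
      refine ⟨n + 1, fun i => Nat.casesOn i u t, rfl, hn, ?_⟩
      intro i hi
      cases i with
      | zero => simpa [h0] using hc
      | succ j => exact hcov j (by omega)

private lemma chain_le {n : ℕ} {t : ℕ → L} (h : ∀ i < n, t i ⋖ t (i + 1))
    {i j : ℕ} (hij : i ≤ j) (hjn : j ≤ n) : t i ≤ t j := by
  have key : ∀ d k, k + d ≤ n → t k ≤ t (k + d) := by
    intro d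
    induction d with
    | zero => exact fun k _ => le_rfl
    | succ e ihe =>
      intro k hk
      exact (ihe k (by omega)).trans (h (k + e) (by omega)).le
  have := key (j - i) i (by omega)
  rwa [Nat.add_sub_cancel' hij] at this

private lemma chain_up (p : L × L) :
    ∀ (n : ℕ) (e : ℕ → L) (x y : L), x ⋖ y → e 0 ≤ x → y ≤ x ⊔ e n →
      (∀ i < n, ∃ r r' : L, CProj p (r, r') ∧ r ≤ e i ∧ e (i + 1) = e i ⊔ r') →
      CProj p (x, y)
  | 0, e, x, y, hxy, h0, htop, _ =>
      absurd (htop.trans_eq (sup_eq_left.2 h0)) hxy.lt.not_ge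
  | (n + 1), e, x, y, hxy, h0, htop, hstep => by
    by_cases hc : y ≤ x ⊔ e n
    · exact chain_up p n e x y hxy h0 hc fun i hi => hstep i (by omega)
    · obtain ⟨r, r', hS, hr, he⟩ := hstep n (by omega)
      have hy2 : y ≤ (x ⊔ e n) ⊔ r' := by rw [sup_assoc, ← he]; exact htop
      have s1 : CPersp (r, r') (x ⊔ e n, (x ⊔ e n) ⊔ r') :=
        Or.inl ⟨rfl, hr.trans le_sup_right⟩
      have hlt : y ⊓ (x ⊔ e n) < y :=
        inf_le_left.lt_of_ne fun h => hc ((le_of_eq h.symm).trans inf_le_right)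
      have hx' : x ≤ y ⊓ (x ⊔ e n) := le_inf hxy.lt.le le_sup_left
      have hyz : y ⊓ (x ⊔ e n) = x :=
        ((lt_or_eq_of_le hx').resolve_left fun h => hxy.2 h hlt).symm
      have s2 : CPersp (x ⊔ e n, (x ⊔ e n) ⊔ r') (x, y) := Or.inr ⟨hyz, hy2⟩
      exact Relation.ReflTransGen.trans hS ((Relation.ReflTransGen.single s1).tail s2)

private lemma good_of_chain (p : L × L) (n : ℕ) (t : ℕ → L)
    (h : ∀ i < n, CProj p (t i, t (i + 1)) ∧ t i ≤ t (i + 1)) : Good p (t 0) (t n) :=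
  fun x y hx hxy hy => chain_up p n t x y hxy hx (hy.trans le_sup_right)
    fun i hi => ⟨t i, t (i + 1), (h i hi).1, le_rfl, (sup_eq_right.2 (h i hi).2).symm⟩

private lemma Good.mono {p : L × L} {u v u' v' : L} (h : Good p u v)
    (hu : u ≤ u') (hv : v' ≤ v) : Good p u' v' :=
  fun x y hx hxy hy => h x y (hu.trans hx) hxy (hy.trans hv)

private lemma Good.sup [Fintype L] {p : L × L} {u v : L} (h : Good p u v) (huv : u ≤ v)
    (w : L) : Good p (u ⊔ w) (v ⊔ w) := by
  obtain ⟨n, t, h0, hn, hcov⟩ := exists_cov_chain u v huv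
  have key := good_of_chain p n (fun i => t i ⊔ w) ?_
  · rw [h0, hn] at key; exact key
  · intro i hi
    have hP : CProj p (t i, t (i + 1)) :=
      h (t i) (t (i + 1)) (h0 ▸ chain_le hcov (Nat.zero_le i) hi.le) (hcov i hi)
        (hn ▸ chain_le hcov hi le_rfl)
    have heq : (t i ⊔ w) ⊔ t (i + 1) = t (i + 1) ⊔ w := by
      rw [sup_right_comm, sup_eq_right.2 (hcov i hi).le]
    refine ⟨Relation.ReflTransGen.tail hP (Or.inl ⟨heq, le_sup_left⟩), ?_⟩
    exact sup_le_sup_right (hcov i hi).le w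

private lemma Good.inf [Fintype L] {p : L × L} {u v : L} (h : Good p u v) (huv : u ≤ v)
    (w : L) : Good p (u ⊓ w) (v ⊓ w) := by
  obtain ⟨n, t, h0, hn, hcov⟩ := exists_cov_chain u v huv
  have key := good_of_chain p n (fun i => t i ⊓ w) ?_
  · rw [h0, hn] at key; exact key
  · intro i hi
    have hP : CProj p (t i, t (i + 1)) :=
      h (t i) (t (i + 1)) (h0 ▸ chain_le hcov (Nat.zero_le i) hi.le) (hcov i hi)
        (hn ▸ chain_le hcov hi le_rfl)
    have heq : (t (i + 1) ⊓ w) ⊓ t i = t i ⊓ w := by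
      rw [inf_right_comm, inf_eq_right.2 (hcov i hi).le]
    refine ⟨Relation.ReflTransGen.tail hP (Or.inr ⟨heq, inf_le_left⟩), ?_⟩
    exact inf_le_inf_right w (hcov i hi).le

private lemma Good.concat [Fintype L] {p : L × L} {u v w : L} (h1 : Good p u v)
    (h2 : Good p v w) (huv : u ≤ v) (hvw : v ≤ w) : Good p u w := by
  obtain ⟨n1, t1, a0, a1, ac⟩ := exists_cov_chain u v huv
  obtain ⟨n2, t2, b0, b1, bc⟩ := exists_cov_chain v w hvw
  have hf1 : ∀ j ≤ n1, (if j ≤ n1 then t1 j else t2 (j - n1)) = t1 j := fun j hj => if_pos hj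
  have hf2 : ∀ j, n1 ≤ j → (if j ≤ n1 then t1 j else t2 (j - n1)) = t2 (j - n1) := by
    intro j hj
    rcases eq_or_lt_of_le hj with rfl | hlt
    · rw [if_pos le_rfl, Nat.sub_self, b0, a1]
    · exact if_neg (by omega)
  have key := good_of_chain p (n1 + n2) (fun i => if i ≤ n1 then t1 i else t2 (i - n1)) ?_
  · have e0 : (if 0 ≤ n1 then t1 0 else t2 (0 - n1)) = u := by rw [if_pos (Nat.zero_le n1), a0]
    have en : (if n1 + n2 ≤ n1 then t1 (n1 + n2) else t2 (n1 + n2 - n1)) = w := by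
      rw [hf2 (n1 + n2) (by omega), Nat.add_sub_cancel_left, b1]
    simp only [e0, en] at key
    exact key
  · intro i hi
    by_cases hc : i + 1 ≤ n1
    · rw [hf1 i (by omega), hf1 (i + 1) hc]
      have hcv := ac i (by omega)
      exact ⟨h1 (t1 i) (t1 (i + 1)) (a0 ▸ chain_le ac (Nat.zero_le i) (by omega)) hcv
        (a1 ▸ chain_le ac hc le_rfl), hcv.le⟩
    · have hi1 : n1 ≤ i := by omega
      rw [hf2 i hi1, hf2 (i + 1) (by omega), show i + 1 - n1 = (i - n1) + 1 from by omega]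
      have hcv := bc (i - n1) (by omega)
      exact ⟨h2 (t2 (i - n1)) (t2 (i - n1 + 1))
        (b0 ▸ chain_le bc (Nat.zero_le _) (by omega)) hcv
        (b1 ▸ chain_le bc (by omega) le_rfl), hcv.le⟩

/-- The congruence associated with a prime interval `p` : `a ≡ b` iff every prime
interval inside `[a ⊓ b, a ⊔ b]` is congruence-projective from `p`. -/
def primeCon [Fintype L] (p : L × L) : LatCon L where
  rel a b := Good p (a ⊓ b) (a ⊔ b)
  refl a := by
    intro x y hx hxy hy
    rw [inf_idem] at hx
    rw [sup_idem] at hy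
    exact absurd (hy.trans hx) hxy.lt.not_ge
  symm {a b} h := fun x y hx hxy hy =>
    h x y (by rwa [inf_comm]) hxy (by rwa [sup_comm])
  trans {a b c} h1 h2 := by
    have g1 : Good p ((a ⊓ b) ⊓ (b ⊓ c)) (b ⊓ c) :=
      (Good.inf h1 inf_le_sup (b ⊓ c)).mono le_rfl
        (le_inf (inf_le_left.trans le_sup_right) le_rfl)
    have g3 : Good p (b ⊔ c) ((a ⊔ b) ⊔ (b ⊔ c)) :=
      (Good.sup h1 inf_le_sup (b ⊔ c)).mono
        (sup_le (inf_le_right.trans le_sup_left) le_rfl) le_rfl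
    have gmid := g1.concat h2 inf_le_right inf_le_sup
    have gall := gmid.concat g3 (inf_le_right.trans inf_le_sup) le_sup_right
    exact gall.mono
      (le_inf (inf_le_left.trans inf_le_left) (inf_le_right.trans inf_le_right))
      (sup_le (le_sup_left.trans le_sup_left) (le_sup_right.trans le_sup_right))
  sup_comp {a b c d} h1 h2 := by
    have g1 : Good p ((a ⊓ b) ⊔ (c ⊓ d)) ((a ⊔ b) ⊔ (c ⊓ d)) := Good.sup h1 inf_le_sup (c ⊓ d)
    have g2 : Good p ((a ⊔ b) ⊔ (c ⊓ d)) ((a ⊔ b) ⊔ (c ⊔ d)) :=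
      (Good.sup h2 inf_le_sup (a ⊔ b)).mono (le_of_eq (sup_comm _ _)) (le_of_eq (sup_comm _ _))
    have g := g1.concat g2 (sup_le_sup_right inf_le_sup _) (sup_le_sup_left inf_le_sup _)
    exact g.mono
      (sup_le (le_inf (inf_le_left.trans le_sup_left) (inf_le_right.trans le_sup_left))
        (le_inf (inf_le_left.trans le_sup_right) (inf_le_right.trans le_sup_right)))
      (sup_le (sup_le (le_sup_left.trans le_sup_left) (le_sup_left.trans le_sup_right))
        (sup_le (le_sup_right.trans le_sup_left) (le_sup_right.trans le_sup_right)))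
  inf_comp {a b c d} h1 h2 := by
    have g1 : Good p ((a ⊓ b) ⊓ (c ⊔ d)) ((a ⊔ b) ⊓ (c ⊔ d)) := Good.inf h1 inf_le_sup (c ⊔ d)
    have g2 : Good p ((a ⊓ b) ⊓ (c ⊓ d)) ((a ⊓ b) ⊓ (c ⊔ d)) :=
      (Good.inf h2 inf_le_sup (a ⊓ b)).mono (le_of_eq (inf_comm _ _)) (le_of_eq (inf_comm _ _))
    have g := g2.concat g1 (inf_le_inf_left _ inf_le_sup) (inf_le_inf_right _ inf_le_sup)
    exact g.mono
      (le_inf (le_inf (inf_le_left.trans inf_le_left) (inf_le_right.trans inf_le_left))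
        (le_inf (inf_le_left.trans inf_le_right) (inf_le_right.trans inf_le_right)))
      (sup_le (le_inf (inf_le_left.trans le_sup_left) (inf_le_right.trans le_sup_left))
        (le_inf (inf_le_left.trans le_sup_right) (inf_le_right.trans le_sup_right)))

end Aux

theorem jakubik [Fintype L] (p q : L × L) (hp : IsPrimeInt p) (hq : IsPrimeInt q) :
    Collapses p q ↔ CProj p q := by
  constructor
  · intro h
    have hpp : (primeCon p).rel p.1 p.2 := by
      intro x y hx hxy hy
      rw [inf_eq_left.2 hp.le] at hx
      rw [sup_eq_right.2 hp.le] at hy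
      have hx1 : x = p.1 := by
        rcases lt_or_eq_of_le hx with h' | h'
        · exact absurd (hxy.lt.trans_le hy) (hp.2 h')
        · exact h'.symm
      have hy1 : y = p.2 := by
        rcases lt_or_eq_of_le hy with h' | h'
        · exact absurd h' (hp.2 (hx1 ▸ hxy.lt))
        · exact h'
      rw [hx1, hy1]
      exact Relation.ReflTransGen.refl
    exact h (primeCon p) hpp q.1 q.2 inf_le_left hq le_sup_right
  · intro h
    clear hp hq
    induction h with
    | refl => exact fun θ hθ => hθ
    | @tail b c hbc hstep ih =>
      intro θ hθ
      have hb := ih θ hθ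
      rcases hstep with ⟨h1, h2⟩ | ⟨h1, h2⟩
      · have := θ.sup_comp (θ.refl c.1) hb
        rwa [sup_eq_left.2 h2, h1] at this
      · have := θ.inf_comp (θ.refl c.2) hb
        rwa [h1, inf_eq_left.2 h2] at this
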